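/- Let 0 < α ≤ 1 and let h belong to the class G(α). Then for every z in the open unit disk 𝔻, (1 − |z|²)·|z·h''(z)/h'(z)| ≤ α·|z|·(1 + |z|); in particular sup_{z∈𝔻} (1 − |z|²)·|h''(z)/h'(z)| ≤ 2α. -/

import Mathlib

open Complex Metric

/-- The class `G(α)`: analytic functions `h` on the unit disk with `h(0) = 0`, `h'(0) = 1`,
`h'(z) ≠ 0` on the disk, and `Re (z h''(z) / (α h'(z))) < 1/2` on the disk. -/
noncomputable def GClass (α : ℝ) (h : ℂ → ℂ) : Prop :=
  AnalyticOnNhd ℂ h (ball (0:ℂ) 1) ∧ h 0 = 0 ∧ deriv h 0 = 1 ∧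
    (∀ z ∈ ball (0:ℂ) 1, deriv h z ≠ 0) ∧
    ∀ z ∈ ball (0:ℂ) 1, (z * deriv (deriv h) z / ((α : ℂ) * deriv h z)).re < 1/2
theorem stmt_8 {α : ℝ} (hα0 : 0 < α) (hα1 : α ≤ 1) {h : ℂ → ℂ} (hG : GClass α h) :
    (∀ z ∈ ball (0:ℂ) 1,
      (1 - ‖z‖ ^ 2) * ‖z * deriv (deriv h) z / deriv h z‖ ≤
        α * ‖z‖ * (1 + ‖z‖)) ∧
    (⨆ z : ball (0:ℂ) 1,
      (1 - ‖(z : ℂ)‖ ^ 2) * ‖deriv (deriv h) z / deriv h z‖) ≤ 2 * α := by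
  obtain ⟨hA, h0, hd0, hdne, hre⟩ := hG
  have hαC : (α : ℂ) ≠ 0 := by exact_mod_cast hα0.ne'
  set P : ℂ → ℂ := fun z => z * deriv (deriv h) z / ((α : ℂ) * deriv h z) with hP
  have hdd : AnalyticOnNhd ℂ (deriv (deriv h)) (ball (0:ℂ) 1) := hA.deriv.deriv
  have hd : AnalyticOnNhd ℂ (deriv h) (ball (0:ℂ) 1) := hA.deriv
  have hden : ∀ z ∈ ball (0:ℂ) 1, (α : ℂ) * deriv h z ≠ 0 := fun z hz =>
    mul_ne_zero hαC (hdne z hz)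
  have hPdiff : DifferentiableOn ℂ P (ball (0:ℂ) 1) := by
    intro z hz
    exact (((differentiable_id.differentiableAt.mul
      (hdd z hz).differentiableAt).div
      ((differentiableAt_const _).mul (hd z hz).differentiableAt)
      (hden z hz)).differentiableWithinAt)
  have hP0 : P 0 = 0 := by simp [hP]
  have hPne1 : ∀ z ∈ ball (0:ℂ) 1, P z - 1 ≠ 0 := by
    intro z hz hc
    have h1 : (P z).re < 1/2 := hre z hz
    have h2 : P z = 1 := sub_eq_zero.mp hc
    rw [h2] at h1
    norm_num at h1
  have habs_lt : ∀ z ∈ ball (0:ℂ) 1, ‖P z‖ < ‖P z - 1‖ := by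
    intro z hz
    have hre' := hre z hz
    have h1 : ‖P z‖ ^ 2 < ‖P z - 1‖ ^ 2 := by
      rw [Complex.sq_norm, Complex.sq_norm, Complex.normSq_apply, Complex.normSq_apply]
      simp only [Complex.sub_re, Complex.sub_im, Complex.one_re, Complex.one_im]
      nlinarith [hre']
    exact lt_of_pow_lt_pow_left₀ 2 (norm_nonneg _) h1
  set g : ℂ → ℂ := fun z => P z / (P z - 1) with hg
  have hgdiff : DifferentiableOn ℂ g (ball (0:ℂ) 1) := by
    intro z hz
    exact ((hPdiff z hz).div ((hPdiff z hz).sub (differentiableWithinAt_const 1))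
      (hPne1 z hz))
  have hg0 : g 0 = 0 := by simp [hg, hP0]
  have hmaps : Set.MapsTo g (ball (0:ℂ) 1) (ball (0:ℂ) 1) := by
    intro z hz
    rw [mem_ball_zero_iff]
    simp only [hg, norm_div]
    rw [div_lt_one (lt_of_le_of_lt (norm_nonneg _) (habs_lt z hz))]
    exact habs_lt z hz
  -- Schwarz lemma
  have hschwarz : ∀ z ∈ ball (0:ℂ) 1, ‖g z‖ ≤ ‖z‖ := by
    intro z hz
    exact Complex.norm_le_norm_of_mapsTo_ball hgdiff (hmaps.mono_right ball_subset_closedBall) hg0 (mem_ball_zero_iff.mp hz)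
  -- key: (1 - |z|) * |P z| ≤ |z|
  have hkey : ∀ z ∈ ball (0:ℂ) 1, (1 - ‖z‖) * ‖P z‖ ≤ ‖z‖ := by
    intro z hz
    have h1 := hschwarz z hz
    have h2 : ‖g z‖ = ‖P z‖ / ‖P z - 1‖ := by
      simp [hg, map_div₀]
    rw [h2, div_le_iff₀ (lt_of_le_of_lt (norm_nonneg _) (habs_lt z hz))] at h1
    have h3 : ‖P z - 1‖ ≤ ‖P z‖ + 1 := by
      calc ‖P z - 1‖ ≤ ‖P z‖ + ‖(-1 : ℂ)‖ := by
            simpa [sub_eq_add_neg] using norm_add_le (P z) (-1)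
        _ = ‖P z‖ + 1 := by simp
    nlinarith [norm_nonneg (P z), norm_nonneg z]
  -- relation |z * h''/h'| = α * |P z|
  have hrel : ∀ z ∈ ball (0:ℂ) 1,
      ‖z * deriv (deriv h) z / deriv h z‖ = α * ‖P z‖ := by
    intro z hz
    have : z * deriv (deriv h) z / deriv h z = (α : ℂ) * P z := by
      field_simp [hP, hαC, hdne z hz]
      simp only [hP]
      rw [mul_comm (deriv h z) (α:ℂ), mul_div_assoc', mul_comm ((α:ℂ) * deriv h z),
        mul_div_cancel_right₀ _ (hden z hz)]
    rw [this, norm_mul, Complex.norm_real, Real.norm_eq_abs, abs_of_pos hα0]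
  -- main inequality
  have hmain : ∀ z ∈ ball (0:ℂ) 1,
      (1 - ‖z‖ ^ 2) * ‖z * deriv (deriv h) z / deriv h z‖ ≤
        α * ‖z‖ * (1 + ‖z‖) := by
    intro z hz
    rw [hrel z hz]
    have hz1 : ‖z‖ < 1 := mem_ball_zero_iff.mp hz
    have hk := hkey z hz
    have hmul := mul_le_mul_of_nonneg_left hk
      (show (0:ℝ) ≤ α * (1 + ‖z‖) by positivity)
    nlinarith [hmul]
  refine ⟨hmain, ?_⟩
  -- derivative bound at 0 : |h''(0)| ≤ α
  have hd0' : ‖deriv (deriv h) 0‖ ≤ α := by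
    have h0ball : (0:ℂ) ∈ ball (0:ℂ) 1 := by simp
    have hderivg : ‖deriv g 0‖ ≤ 1 :=
      Complex.norm_deriv_le_one_of_mapsTo_ball hgdiff
        (by rw [hg0]; exact hmaps.mono_right ball_subset_closedBall) one_pos
    -- compute deriv P 0
    have hq : ∀ᶠ z in nhds (0:ℂ), P z = z * (deriv (deriv h) z / ((α:ℂ) * deriv h z)) := by
      filter_upwards with z
      simp [hP, mul_div_assoc]
    have hqdiff : DifferentiableAt ℂ (fun z => deriv (deriv h) z / ((α:ℂ) * deriv h z)) 0 :=
      ((hdd 0 h0ball).differentiableAt).div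
        ((differentiableAt_const _).mul (hd 0 h0ball).differentiableAt) (hden 0 h0ball)
    have hPdiff0 : DifferentiableAt ℂ P 0 := (hPdiff.differentiableAt
      (isOpen_ball.mem_nhds h0ball))
    have hderivP : deriv P 0 = deriv (deriv h) 0 / (α : ℂ) := by
      have := deriv_fun_mul (c := fun z : ℂ => z) (differentiableAt_id (𝕜 := ℂ) (x := (0:ℂ))) hqdiff
      have heq : deriv P 0 = deriv (fun z => z * (deriv (deriv h) z / ((α:ℂ) * deriv h z))) 0 :=
        Filter.EventuallyEq.deriv_eq hq
      rw [heq, this]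
      simp [hd0]
    have hderivg0 : deriv g 0 = -(deriv P 0) := by
      have hPm1 : DifferentiableAt ℂ (fun z => P z - 1) 0 := hPdiff0.sub (differentiableAt_const 1)
      have := deriv_fun_div hPdiff0 hPm1 (hPne1 0 (by simp))
      rw [hg]
      rw [this]
      rw [deriv_fun_sub hPdiff0 (differentiableAt_const 1)]
      simp [hP0]
    rw [hderivg0, hderivP] at hderivg
    rw [norm_neg, norm_div, Complex.norm_real, Real.norm_eq_abs, abs_of_pos hα0,
      div_le_one hα0] at hderivg
    exact hderivg
  -- sup bound
  have : Nonempty (ball (0:ℂ) 1) := ⟨⟨0, by simp⟩⟩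
  apply ciSup_le
  rintro ⟨z, hz⟩
  show (1 - ‖z‖ ^ 2) * ‖deriv (deriv h) z / deriv h z‖ ≤ 2 * α
  have hz1 : ‖z‖ < 1 := mem_ball_zero_iff.mp hz
  by_cases hz0 : z = 0
  · subst hz0
    rw [hd0]
    simp only [norm_zero, norm_div, norm_one, div_one]
    norm_num
    linarith [hd0']
  · have hm := hmain z hz
    have habsz : 0 < ‖z‖ := norm_pos_iff.mpr hz0
    rw [norm_div, norm_mul, mul_div_assoc] at hm
    rw [norm_div]
    have h3 : (1 - ‖z‖ ^ 2) *
        (‖deriv (deriv h) z‖ / ‖deriv h z‖) ≤ α * (1 + ‖z‖) := by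
      apply le_of_mul_le_mul_right _ habsz
      calc (1 - ‖z‖ ^ 2) *
            (‖deriv (deriv h) z‖ / ‖deriv h z‖) * ‖z‖
          = (1 - ‖z‖ ^ 2) *
            (‖z‖ * (‖deriv (deriv h) z‖ / ‖deriv h z‖)) := by
            ring
        _ ≤ α * ‖z‖ * (1 + ‖z‖) := hm
        _ = α * (1 + ‖z‖) * ‖z‖ := by ring
    nlinarith [h3]
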